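/- Let F be a field of characteristic different from 3, d ∈ F, and let x', y' ∈ F satisfy y'² = x'³ − 27d with x' ≠ 0. Set X := (x'³ − 108d)/(9x'²) and Y := y'(x'³ + 216d)/(27x'³). Then Y² = X³ + d; that is, the map φ̂(x', y') = ((x'³ − 108d)/(9x'²), y'(x'³ + 216d)/(27x'³)) sends affine points of the curve E'_d with nonzero x-coordinate to affine points of the curve E_d. -/
import Mathlib

/-- Let `F` be a field of characteristic different from 3, `d ∈ F`,
and let `x', y' ∈ F` satisfy `y'² = x'³ − 27d` with `x' ≠ 0`.
Set `X := (x'³ − 108d)/(9x'²)` and `Y := y'(x'³ + 216d)/(27x'³)`. Then `Y² = X³ + d`;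
that is, the map `φ̂(x', y') = ((x'³ − 108d)/(9x'²), y'(x'³ + 216d)/(27x'³))` sends
affine points of `E'_d : y² = x³ − 27d` with nonzero `x`-coordinate to affine points
of `E_d : y² = x³ + d`. -/
theorem sextic_isogeny_backward {F : Type*} [Field F] (h3 : (3 : F) ≠ 0)
    (d x' y' : F) (hx : x' ≠ 0) (h : y' ^ 2 = x' ^ 3 - 27 * d) :
    (y' * (x' ^ 3 + 216 * d) / (27 * x' ^ 3)) ^ 2 =
      ((x' ^ 3 - 108 * d) / (9 * x' ^ 2)) ^ 3 + d := by
  have h27 : (27 : F) ≠ 0 := by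
    intro h27; apply h3
    have : (27 : F) = 3 * 3 * 3 := by norm_num
    rw [this] at h27
    rcases mul_eq_zero.mp h27 with h' | h'
    · rcases mul_eq_zero.mp h' with h'' | h'' <;> exact h''
    · exact h'
  have h9 : (9 : F) ≠ 0 := by
    intro h9; apply h3
    have : (9 : F) = 3 * 3 := by norm_num
    rw [this] at h9
    rcases mul_eq_zero.mp h9 with h' | h' <;> exact h'
  field_simp
  ring_nf
  rw [h]
  ring
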